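/- Let X be a (75,32,10,16) strongly regular graph with a 4-clique K whose outside-degree distribution is (3,20,48,0) with b_4=0, and suppose each vertex with 2 neighbors in K is adjacent to exactly two of the three vertices x1,x2,x3 having 0 neighbors in K. Then for each pair i<j, the set N(x_i) ∩ N(x_j) has exactly 16 vertices and the subgraph induced on it is 2-regular (hence a disjoint union of cycles). -/

import Mathlib

open Finset

/-- The number of neighbors of `x` inside the vertex set `K`. -/
def nbrs {V : Type*} [DecidableEq V] (G : SimpleGraph V) [DecidableRel G.Adj]
    (K : Finset V) (x : V) : ℕ :=
  (K.filter (fun y => G.Adj x y)).card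

/-- The number of vertices outside `K` with exactly `i` neighbors in `K`. -/
def bcount {V : Type*} [Fintype V] [DecidableEq V] (G : SimpleGraph V) [DecidableRel G.Adj]
    (K : Finset V) (i : ℕ) : ℕ :=
  ((univ \ K).filter (fun x => nbrs G K x = i)).card

lemma card_common {V : Type*} [Fintype V] [DecidableEq V] (G : SimpleGraph V)
    [DecidableRel G.Adj] (v w : V) :
    (G.neighborFinset v ∩ G.neighborFinset w).card = Fintype.card (G.commonNeighbors v w) := by
  rw [← Set.toFinset_card]
  congr 1
  ext x
  rw [Set.mem_toFinset]
  simp [SimpleGraph.commonNeighbors]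

lemma exactlyOne {V : Type*} [DecidableEq V] (G : SimpleGraph V) [DecidableRel G.Adj]
    (i j k y : V) (hij : i ≠ j) (hik : i ≠ k) (hjk : j ≠ k)
    (h2 : (({i, j, k} : Finset V).filter (fun z => G.Adj y z)).card = 2)
    (hyi : G.Adj y i) :
    (G.Adj y j ∧ ¬ G.Adj y k) ∨ (¬ G.Adj y j ∧ G.Adj y k) := by
  by_cases hj : G.Adj y j <;> by_cases hk : G.Adj y k
  · exfalso
    have hsub : ({i, j, k} : Finset V) ⊆ ({i, j, k} : Finset V).filter (fun z => G.Adj y z) := by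
      intro x hx
      simp only [mem_insert, mem_singleton] at hx
      rcases hx with rfl | rfl | rfl <;> simp [mem_filter, hyi, hj, hk]
    have h3 : ({i, j, k} : Finset V).card = 3 := by
      rw [card_insert_of_notMem (by simp [hij, hik]), card_insert_of_notMem (by simp [hjk]),
        card_singleton]
    have := card_le_card hsub
    omega
  · exact Or.inl ⟨hj, hk⟩
  · exact Or.inr ⟨hj, hk⟩
  · exfalso
    have hsub : ({i, j, k} : Finset V).filter (fun z => G.Adj y z) ⊆ {i} := by
      intro x hx
      simp only [mem_filter, mem_insert, mem_singleton] at hx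
      rcases hx with ⟨rfl | rfl | rfl, hadj⟩
      · simp
      · exact absurd hadj hj
      · exact absurd hadj hk
    have := card_le_card hsub
    simp at this
    omega

lemma key {V : Type*} [Fintype V] [DecidableEq V]
    (G : SimpleGraph V) [DecidableRel G.Adj]
    (hG : G.IsSRGWith 75 32 10 16)
    (K : Finset V) (a b c : V) (hab : a ≠ b) (hac : a ≠ c) (hbc : b ≠ c)
    (h0 : ∀ i ∈ ({a, b, c} : Finset V), nbrs G K i = 0)
    (hN : ∀ i ∈ ({a, b, c} : Finset V),
      G.neighborFinset i ⊆ (univ \ K).filter (fun y => nbrs G K y = 2))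
    (htwo : ∀ y ∈ (univ \ K).filter (fun y => nbrs G K y = 2),
      (({a, b, c} : Finset V).filter (fun z => G.Adj y z)).card = 2) :
    (G.neighborFinset a ∩ G.neighborFinset b).card = 16 ∧
      ∀ v ∈ G.neighborFinset a ∩ G.neighborFinset b,
        ((G.neighborFinset a ∩ G.neighborFinset b).filter (fun w => G.Adj v w)).card = 2 := by
  have ha : a ∈ ({a, b, c} : Finset V) := by simp
  have hb : b ∈ ({a, b, c} : Finset V) := by simp
  have hc : c ∈ ({a, b, c} : Finset V) := by simp
  -- nonadjacency within {a,b,c}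
  have nonadj : ∀ i ∈ ({a, b, c} : Finset V), ∀ j ∈ ({a, b, c} : Finset V), ¬ G.Adj i j := by
    intro i hi j hj hadj
    have hjn : j ∈ G.neighborFinset i := by simpa [SimpleGraph.mem_neighborFinset] using hadj
    have := hN i hi hjn
    rw [mem_filter] at this
    have := this.2
    rw [h0 j hj] at this
    omega
  have hcard : (G.neighborFinset a ∩ G.neighborFinset b).card = 16 := by
    rw [card_common]
    exact hG.of_not_adj hab (nonadj a ha b hb)
  refine ⟨hcard, ?_⟩
  intro v hv
  rw [mem_inter, SimpleGraph.mem_neighborFinset, SimpleGraph.mem_neighborFinset] at hv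
  obtain ⟨hav, hbv⟩ := hv
  have hvT : v ∈ (univ \ K).filter (fun y => nbrs G K y = 2) :=
    hN a ha (by simpa [SimpleGraph.mem_neighborFinset] using hav)
  -- v is adjacent to a and b, hence not to c
  have hvc : ¬ G.Adj v c := by
    rcases exactlyOne G a b c v hab hac hbc (htwo v hvT) hav.symm with ⟨_, h⟩ | ⟨h, _⟩
    · exact h
    · exact absurd hbv.symm h
  have hvnec : v ≠ c := by
    intro h
    have h2 := (mem_filter.mp hvT).2
    rw [h, h0 c hc] at h2
    omega
  -- three pieces
  set P := G.neighborFinset v ∩ (G.neighborFinset a ∩ G.neighborFinset b) with hP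
  set Q := G.neighborFinset v ∩ (G.neighborFinset a ∩ G.neighborFinset c) with hQ
  set R := G.neighborFinset v ∩ (G.neighborFinset b ∩ G.neighborFinset c) with hR
  -- a generic split lemma
  have split : ∀ i j k : V, i ≠ j → i ≠ k → j ≠ k →
      (({i, j, k} : Finset V) = ({a, b, c} : Finset V)) →
      G.neighborFinset v ∩ G.neighborFinset i =
        (G.neighborFinset v ∩ (G.neighborFinset i ∩ G.neighborFinset j)) ∪
        (G.neighborFinset v ∩ (G.neighborFinset i ∩ G.neighborFinset k)) := by
    intro i j k hij hik hjk hS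
    ext y
    simp only [mem_inter, mem_union, SimpleGraph.mem_neighborFinset]
    constructor
    · rintro ⟨hvy, hiy⟩
      have hyT : y ∈ (univ \ K).filter (fun z => nbrs G K z = 2) := by
        refine hN i (hS ▸ (by simp : i ∈ ({i, j, k} : Finset V))) ?_
        simpa [SimpleGraph.mem_neighborFinset] using hiy
      have h2 : (({i, j, k} : Finset V).filter (fun z => G.Adj y z)).card = 2 := by
        rw [hS]; exact htwo y hyT
      rcases exactlyOne G i j k y hij hik hjk h2 hiy.symm with ⟨hj', _⟩ | ⟨_, hk'⟩
      · exact Or.inl ⟨hvy, hiy, hj'.symm⟩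
      · exact Or.inr ⟨hvy, hiy, hk'.symm⟩
    · rintro (⟨hvy, hiy, _⟩ | ⟨hvy, hiy, _⟩) <;> exact ⟨hvy, hiy⟩
  have disj : ∀ i j k : V, i ≠ j → i ≠ k → j ≠ k →
      (({i, j, k} : Finset V) = ({a, b, c} : Finset V)) →
      Disjoint (G.neighborFinset v ∩ (G.neighborFinset i ∩ G.neighborFinset j))
        (G.neighborFinset v ∩ (G.neighborFinset i ∩ G.neighborFinset k)) := by
    intro i j k hij hik hjk hS
    rw [disjoint_left]
    intro y hy1 hy2
    simp only [mem_inter, SimpleGraph.mem_neighborFinset] at hy1 hy2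
    have hyT : y ∈ (univ \ K).filter (fun z => nbrs G K z = 2) := by
      refine hN i (hS ▸ (by simp : i ∈ ({i, j, k} : Finset V))) ?_
      simpa [SimpleGraph.mem_neighborFinset] using hy1.2.1
    have h2 : (({i, j, k} : Finset V).filter (fun z => G.Adj y z)).card = 2 := by
      rw [hS]; exact htwo y hyT
    rcases exactlyOne G i j k y hij hik hjk h2 hy1.2.1.symm with ⟨_, hk'⟩ | ⟨hj', _⟩
    · exact hk' hy2.2.2.symm
    · exact hj' hy1.2.2.symm
  have Sacb : ({a, c, b} : Finset V) = ({a, b, c} : Finset V) := by ext x; simp; tauto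
  have Sbac : ({b, a, c} : Finset V) = ({a, b, c} : Finset V) := by ext x; simp; tauto
  have Scab : ({c, a, b} : Finset V) = ({a, b, c} : Finset V) := by ext x; simp; tauto
  have eA : P.card + Q.card = 10 := by
    have hu := split a b c hab hac hbc rfl
    have hd := disj a b c hab hac hbc rfl
    have h10 : (G.neighborFinset v ∩ G.neighborFinset a).card = 10 := by
      rw [card_common]
      exact hG.of_adj v a hav.symm
    rw [hu, card_union_of_disjoint hd] at h10
    exact h10
  have eB : P.card + R.card = 10 := by
    have hd := disj b a c hab.symm hbc hac Sbac
    have h10 : (G.neighborFinset v ∩ G.neighborFinset b).card = 10 := by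
      rw [card_common]
      exact hG.of_adj v b hbv.symm
    rw [split b a c hab.symm hbc hac Sbac, card_union_of_disjoint hd] at h10
    have hPP : G.neighborFinset v ∩ (G.neighborFinset b ∩ G.neighborFinset a) = P := by
      rw [hP, inter_comm (G.neighborFinset a)]
    rw [hPP] at h10
    exact h10
  have eC : Q.card + R.card = 16 := by
    have hd := disj c a b hac.symm hbc.symm hab Scab
    have h16 : (G.neighborFinset v ∩ G.neighborFinset c).card = 16 := by
      rw [card_common]
      exact hG.of_not_adj hvnec hvc
    rw [split c a b hac.symm hbc.symm hab Scab, card_union_of_disjoint hd] at h16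
    have hQQ : G.neighborFinset v ∩ (G.neighborFinset c ∩ G.neighborFinset a) = Q := by
      rw [hQ, inter_comm (G.neighborFinset a)]
    have hRR : G.neighborFinset v ∩ (G.neighborFinset c ∩ G.neighborFinset b) = R := by
      rw [hR, inter_comm (G.neighborFinset b)]
    rw [hQQ, hRR] at h16
    exact h16
  have hPcard : P.card = 2 := by omega
  have hfilter : (G.neighborFinset a ∩ G.neighborFinset b).filter (fun w => G.Adj v w) = P := by
    ext y
    simp only [hP, mem_filter, mem_inter, SimpleGraph.mem_neighborFinset]
    tauto
  rw [hfilter, hPcard]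

/-- Case (3,20,48,0,0): given that every 2-neighbor vertex is adjacent to
exactly two of the three 0-neighbor vertices `x1,x2,x3`, for each pair
`a ≠ b` among them the common neighborhood `N(a) ∩ N(b)` has exactly 16
vertices and induces a 2-regular subgraph (a disjoint union of cycles). -/
theorem stmt19 {V : Type*} [Fintype V] [DecidableEq V]
    (G : SimpleGraph V) [DecidableRel G.Adj]
    (hG : G.IsSRGWith 75 32 10 16)
    (K : Finset V) (hK : G.IsNClique 4 K)
    (hb0 : bcount G K 0 = 3) (hb1 : bcount G K 1 = 20)
    (hb2 : bcount G K 2 = 48) (hb3 : bcount G K 3 = 0) (hb4 : bcount G K 4 = 0)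
    (x1 x2 x3 : V) (h12 : x1 ≠ x2) (h13 : x1 ≠ x3) (h23 : x2 ≠ x3)
    (hX0 : (univ \ K).filter (fun x => nbrs G K x = 0) = {x1, x2, x3})
    (hN : ∀ i ∈ ({x1, x2, x3} : Finset V),
      G.neighborFinset i ⊆ (univ \ K).filter (fun y => nbrs G K y = 2))
    (htwo : ∀ y ∈ (univ \ K).filter (fun y => nbrs G K y = 2),
      (({x1, x2, x3} : Finset V).filter (fun z => G.Adj y z)).card = 2) :
    ∀ a ∈ ({x1, x2, x3} : Finset V), ∀ b ∈ ({x1, x2, x3} : Finset V), a ≠ b →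
      (G.neighborFinset a ∩ G.neighborFinset b).card = 16 ∧
      ∀ v ∈ G.neighborFinset a ∩ G.neighborFinset b,
        ((G.neighborFinset a ∩ G.neighborFinset b).filter (fun w => G.Adj v w)).card = 2 := by
  have h0 : ∀ i ∈ ({x1, x2, x3} : Finset V), nbrs G K i = 0 := by
    intro i hi
    rw [← hX0] at hi
    exact (mem_filter.mp hi).2
  intro a ha b hb hneab
  simp only [mem_insert, mem_singleton] at ha hb
  have main : ∀ c : V, a ≠ c → b ≠ c → ({a, b, c} : Finset V) = ({x1, x2, x3} : Finset V) →
      (G.neighborFinset a ∩ G.neighborFinset b).card = 16 ∧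
      ∀ v ∈ G.neighborFinset a ∩ G.neighborFinset b,
        ((G.neighborFinset a ∩ G.neighborFinset b).filter (fun w => G.Adj v w)).card = 2 := by
    intro c hac hbc hS
    exact key G hG K a b c hneab hac hbc (hS ▸ h0) (hS ▸ hN) (by rw [hS]; exact htwo)
  rcases ha with rfl | rfl | rfl <;> rcases hb with rfl | rfl | rfl
  · exact absurd rfl hneab
  · exact main x3 h13 h23 rfl
  · refine main x2 h12 h23.symm ?_
    ext x; simp; tauto
  · refine main x3 h23 h13 ?_
    ext x; simp; tauto
  · exact absurd rfl hneab
  · refine main x1 h12.symm h13.symm ?_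
    ext x; simp; tauto
  · refine main x2 h23.symm h12 ?_
    ext x; simp; tauto
  · refine main x1 h13.symm h12.symm ?_
    ext x; simp; tauto
  · exact absurd rfl hneab
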